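/- Let Q be a finite symmetric quiver with a_{ii} ≥ 1 for all i ∈ I, and let γ ∈ ℤ_{≥0}^I. Then the ℚ-linear span of all shuffle products f₁·f₂, taken over all decompositions γ = γ₁ + γ₂ with γ₁,γ₂ ∈ ℤ_{≥0}^I∖{0} and over all f₁ ∈ ℋ_{γ₁}, f₂ ∈ ℋ_{γ₂}, equals J_γ^{P_γ}·ℚ[σ_γ] ⊆ ℋ_γ, i.e. the image of the multiplication map ⊕_{γ₁+γ₂=γ, γ₁,γ₂≠0} ℋ_{γ₁} ⊗ ℋ_{γ₂} → ℋ_γ is precisely the ℚ[σ_γ]-submodule of ℋ_γ generated by J_γ^{P_γ} = J_γ ∩ ℋ_γ^{prim}. -/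

import Mathlib

open MvPolynomial

namespace COHA

variable {I : Type} [Fintype I] [DecidableEq I]

/-- Variables `x_{i,α}`, `i ∈ I`, `1 ≤ α ≤ γ i`. -/
abbrev Vars (γ : I → ℕ) : Type := Σ i : I, Fin (γ i)

/-- The polynomial ring `A_γ = ℚ[x_{i,α}]`. -/
abbrev Amod (γ : I → ℕ) : Type := MvPolynomial (Vars γ) ℚ

/-- A tuple of permutations `σ ∈ P_γ = ∏_i S_{γ^i}` acting on the variables. -/
def permEquiv {γ : I → ℕ} (σ : ∀ i, Equiv.Perm (Fin (γ i))) : Vars γ ≃ Vars γ :=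
  Equiv.sigmaCongrRight σ

/-- Invariance under `P_γ`; `ℋ_γ = {f | IsSym f}`. -/
def IsSym {γ : I → ℕ} (f : Amod γ) : Prop :=
  ∀ σ : ∀ i, Equiv.Perm (Fin (γ i)), rename (permEquiv σ) f = f

/-- The Euler form of the quiver with `a i j` arrows from `i` to `j`. -/
def chi (a : I → I → ℕ) (γ₁ γ₂ : I → ℕ) : ℤ :=
  ∑ i : I, (γ₁ i : ℤ) * (γ₂ i : ℤ) - ∑ i : I, ∑ j : I, (a i j : ℤ) * (γ₁ i : ℤ) * (γ₂ j : ℤ)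

/-- `σ_γ`, the sum of all variables. -/
noncomputable def sigmaP (γ : I → ℕ) : Amod γ := ∑ v : Vars γ, X v

/-- Identification of variable sets coming from an equality of dimension vectors. -/
def castV {γ γ' : I → ℕ} (h : γ = γ') : Vars γ ≃ Vars γ' :=
  Equiv.sigmaCongrRight fun i => finCongr (congrFun h i)

/-- Identification of polynomial rings coming from an equality of dimension vectors. -/
noncomputable def castA {γ γ' : I → ℕ} (h : γ = γ') : Amod γ → Amod γ' :=
  rename (castV h)

/-- `ℋ_γ` as a `ℚ`-submodule of `A_γ`. -/
noncomputable def Hsub (γ : I → ℕ) : Submodule ℚ (Amod γ) where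
  carrier := {f | IsSym f}
  add_mem' := fun {f g} hf hg σ => by rw [map_add, hf σ, hg σ]
  zero_mem' := fun σ => map_zero _
  smul_mem' := fun c f hf σ => by rw [map_smul, hf σ]

/-- `ℋ_γ` as a `ℚ`-subalgebra of `A_γ`. -/
noncomputable def Halg (γ : I → ℕ) : Subalgebra ℚ (Amod γ) where
  carrier := {f | IsSym f}
  mul_mem' := fun {f g} hf hg σ => by rw [map_mul, hf σ, hg σ]
  one_mem' := fun σ => map_one _
  add_mem' := fun {f g} hf hg σ => by rw [map_add, hf σ, hg σ]
  zero_mem' := fun σ => map_zero _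
  algebraMap_mem' := fun r σ => by
    simp [MvPolynomial.algebraMap_eq]
/-- Inclusion of the first block of variables. -/
def inlV {γ₁ γ₂ : I → ℕ} : Vars γ₁ → Vars (γ₁ + γ₂) :=
  fun v => ⟨v.1, Fin.castAdd (γ₂ v.1) v.2⟩

/-- Inclusion of the second block of variables. -/
def inrV {γ₁ γ₂ : I → ℕ} : Vars γ₂ → Vars (γ₁ + γ₂) :=
  fun v => ⟨v.1, Fin.natAdd (γ₁ v.1) v.2⟩

/-- The numerator `∏_{i,j} ∏_{α₁,α₂} (x''_{j,α₂} - x'_{i,α₁})^(a i j)` of the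
Kontsevich–Soibelman kernel. -/
noncomputable def shuffleNum (a : I → I → ℕ) (γ₁ γ₂ : I → ℕ) : Amod (γ₁ + γ₂) :=
  ∏ i : I, ∏ j : I, ∏ α₁ : Fin (γ₁ i), ∏ α₂ : Fin (γ₂ j),
    (X (inrV (γ₁ := γ₁) ⟨j, α₂⟩) - X (inlV (γ₂ := γ₂) ⟨i, α₁⟩)) ^ (a i j)

/-- The denominator `∏_i ∏_{α₁,α₂} (x''_{i,α₂} - x'_{i,α₁})` of the
Kontsevich–Soibelman kernel. -/
noncomputable def shuffleDen (γ₁ γ₂ : I → ℕ) : Amod (γ₁ + γ₂) :=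
  ∏ i : I, ∏ α₁ : Fin (γ₁ i), ∏ α₂ : Fin (γ₂ i),
    (X (inrV (γ₁ := γ₁) ⟨i, α₂⟩) - X (inlV (γ₂ := γ₂) ⟨i, α₁⟩))

/-- `σ` is an `(n₁, n₂)`-shuffle: it is increasing on the two blocks. -/
def IsShuffle (n₁ n₂ : ℕ) (σ : Equiv.Perm (Fin (n₁ + n₂))) : Prop :=
  (∀ p q : Fin n₁, p < q → σ (Fin.castAdd n₂ p) < σ (Fin.castAdd n₂ q)) ∧
  (∀ p q : Fin n₂, p < q → σ (Fin.natAdd n₁ p) < σ (Fin.natAdd n₁ q))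

open Classical in
/-- The sum, over all tuples of shuffles, of the permuted rational functions
`f₁(x') f₂(x'') ∏ (x''-x')^(a i j) / ∏ (x''-x')`, as an element of the fraction
field of `A_{γ₁+γ₂}`. -/
noncomputable def shuffleSum (a : I → I → ℕ) (γ₁ γ₂ : I → ℕ)
    (f₁ : Amod γ₁) (f₂ : Amod γ₂) : FractionRing (Amod (γ₁ + γ₂)) :=
  ∑ σ : ∀ i : I, Equiv.Perm (Fin (γ₁ i + γ₂ i)),
    if ∀ i : I, IsShuffle (γ₁ i) (γ₂ i) (σ i) then
      algebraMap (Amod (γ₁ + γ₂)) _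
          (rename (permEquiv (γ := γ₁ + γ₂) σ)
            (rename (inlV (γ₂ := γ₂)) f₁ * rename (inrV (γ₁ := γ₁)) f₂ *
              shuffleNum a γ₁ γ₂)) /
        algebraMap (Amod (γ₁ + γ₂)) _
          (rename (permEquiv (γ := γ₁ + γ₂) σ) (shuffleDen γ₁ γ₂))
    else 0

open Classical in
/-- The Kontsevich–Soibelman shuffle product `f₁ · f₂ ∈ ℋ_{γ₁+γ₂}`: the unique
polynomial mapping to `shuffleSum` in the fraction field. -/
noncomputable def shuffleMul (a : I → I → ℕ) {γ₁ γ₂ : I → ℕ}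
    (f₁ : Amod γ₁) (f₂ : Amod γ₂) : Amod (γ₁ + γ₂) :=
  if h : ∃ p : Amod (γ₁ + γ₂),
      algebraMap (Amod (γ₁ + γ₂)) (FractionRing (Amod (γ₁ + γ₂))) p =
        shuffleSum a γ₁ γ₂ f₁ f₂
  then h.choose else 0
/-- `A_γ^{prim}`: the subalgebra generated by all differences of variables. -/
noncomputable def Aprim (γ : I → ℕ) : Subalgebra ℚ (Amod γ) :=
  Algebra.adjoin ℚ {f : Amod γ | ∃ u v : Vars γ, f = X u - X v}

/-- For a decomposition `γ = γ₁ + γ₂`, the polynomial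
`F_{γ₁,γ₂} = ∏_{i,j} ∏ (x''-x')^(a i j) / ∏_i ∏ (x''-x')`
(written as a polynomial, assuming `a i i ≥ 1`). -/
noncomputable def Fpoly (a : I → I → ℕ) (γ₁ γ₂ : I → ℕ) : Amod (γ₁ + γ₂) :=
  ∏ i : I, ∏ j : I, ∏ α₁ : Fin (γ₁ i), ∏ α₂ : Fin (γ₂ j),
    (X (inrV (γ₁ := γ₁) ⟨j, α₂⟩) - X (inlV (γ₂ := γ₂) ⟨i, α₁⟩)) ^
      (if i = j then a i i - 1 else a i j)

/-- Generators of `J_γ`: the `P_γ`-orbits of all `F_{γ₁,γ₂}`. -/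
def Jgen (a : I → I → ℕ) (γ : I → ℕ) : Set ↥(Aprim (I := I) γ) :=
  {g | ∃ (γ₁ γ₂ : I → ℕ) (_ : γ₁ ≠ 0) (_ : γ₂ ≠ 0) (h : γ₁ + γ₂ = γ)
        (σ : ∀ i, Equiv.Perm (Fin (γ i))),
      (g : Amod γ) = rename (permEquiv σ) (castA h (Fpoly a γ₁ γ₂))}

/-- The ideal `J_γ ⊆ A_γ^{prim}`. -/
noncomputable def Jideal (a : I → I → ℕ) (γ : I → ℕ) : Ideal ↥(Aprim (I := I) γ) :=
  Ideal.span (Jgen a γ)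

/-- Twice `N_γ(Q) - 2 + Σ_i γ^i`:
`Σ_{i≠j} a_ij γ^i γ^j + Σ_i max(a_ii - 1, 0) γ^i (γ^i - 1)`. -/
def Nnum (a : I → I → ℕ) (γ : I → ℕ) : ℕ :=
  (∑ i : I, ∑ j : I, if i = j then 0 else a i j * γ i * γ j) +
    ∑ i : I, (a i i - 1) * γ i * (γ i - 1)

/-- The bound `N_γ(Q)`. -/
def NQ (a : I → I → ℕ) (γ : I → ℕ) : ℤ :=
  ((Nnum a γ / 2 : ℕ) : ℤ) - (∑ i : I, (γ i : ℤ)) + 2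

section Lemmas
set_option linter.unusedSectionVars false
set_option synthInstance.maxHeartbeats 1000000
set_option maxHeartbeats 1000000
-- Stage 1 lemmas
noncomputable def renameP {γ : I → ℕ} (σ : ∀ i, Equiv.Perm (Fin (γ i))) :
    Amod γ →ₐ[ℚ] Amod γ := rename (permEquiv σ)

lemma permEquiv_mul {γ : I → ℕ} (σ τ : ∀ i, Equiv.Perm (Fin (γ i))) :
    (permEquiv σ) ∘ (permEquiv τ) = permEquiv (σ * τ) := by
  funext v; cases v; rfl

lemma renameP_renameP {γ : I → ℕ} (σ τ : ∀ i, Equiv.Perm (Fin (γ i))) (f : Amod γ) :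
    renameP σ (renameP τ f) = renameP (σ * τ) f := by
  simp [renameP, rename_rename, permEquiv_mul]

noncomputable def Symm (γ : I → ℕ) : Amod γ →ₗ[ℚ] Amod γ where
  toFun f := ∑ σ : ∀ i, Equiv.Perm (Fin (γ i)), renameP σ f
  map_add' f g := by simp [Finset.sum_add_distrib]
  map_smul' c f := by simp [Finset.smul_sum]

lemma Symm_apply (γ : I → ℕ) (f : Amod γ) :
    Symm γ f = ∑ σ : ∀ i, Equiv.Perm (Fin (γ i)), renameP σ f := rfl

lemma renameP_apply {γ : I → ℕ} (σ : ∀ i, Equiv.Perm (Fin (γ i))) (f : Amod γ) :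
    renameP σ f = rename (permEquiv σ) f := rfl

lemma renameP_Symm {γ : I → ℕ} (ρ : ∀ i, Equiv.Perm (Fin (γ i))) (f : Amod γ) :
    renameP ρ (Symm γ f) = Symm γ f := by
  rw [Symm_apply, map_sum]
  rw [Finset.sum_congr rfl fun σ _ => renameP_renameP ρ σ f]
  exact Fintype.sum_equiv (Equiv.mulLeft ρ) _ (fun σ => renameP σ f) (fun σ => rfl)

lemma isSym_Symm (γ : I → ℕ) (f : Amod γ) : IsSym (Symm γ f) :=
  fun ρ => renameP_Symm ρ f

lemma Symm_renameP {γ : I → ℕ} (ρ : ∀ i, Equiv.Perm (Fin (γ i))) (f : Amod γ) :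
    Symm γ (renameP ρ f) = Symm γ f := by
  rw [Symm_apply, Symm_apply]
  rw [Finset.sum_congr rfl fun σ _ => renameP_renameP σ ρ f]
  exact Fintype.sum_equiv (Equiv.mulRight ρ) _ (fun σ => renameP σ f) (fun σ => rfl)

lemma Symm_of_isSym_mul {γ : I → ℕ} {f : Amod γ} (hf : IsSym f) (q : Amod γ) :
    Symm γ (q * f) = (Symm γ q) * f := by
  rw [Symm_apply, Symm_apply, Finset.sum_mul]
  exact Finset.sum_congr rfl fun σ _ => by
    show renameP σ (q * f) = _
    rw [map_mul]; rw [show renameP σ f = f from hf σ]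

lemma card_smul_of_isSym {γ : I → ℕ} {f : Amod γ} (hf : IsSym f) :
    Symm γ f = (Fintype.card (∀ i, Equiv.Perm (Fin (γ i))) : ℚ) • f := by
  rw [Symm_apply]
  rw [Finset.sum_congr rfl fun σ _ => show renameP σ f = f from hf σ]
  rw [Finset.sum_const, Finset.card_univ, Nat.cast_smul_eq_nsmul ℚ]


-- Stage 2: shuffle factorization
def sumPerm {n₁ n₂ : ℕ} (τ₁ : Equiv.Perm (Fin n₁)) (τ₂ : Equiv.Perm (Fin n₂)) :
    Equiv.Perm (Fin (n₁ + n₂)) :=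
  finSumFinEquiv.symm.trans ((τ₁.sumCongr τ₂).trans finSumFinEquiv)

lemma sumPerm_castAdd {n₁ n₂ : ℕ} (τ₁ : Equiv.Perm (Fin n₁)) (τ₂ : Equiv.Perm (Fin n₂))
    (p : Fin n₁) : sumPerm τ₁ τ₂ (Fin.castAdd n₂ p) = Fin.castAdd n₂ (τ₁ p) := by
  simp [sumPerm, ← finSumFinEquiv_apply_left, Equiv.sumCongr_apply]

lemma sumPerm_natAdd {n₁ n₂ : ℕ} (τ₁ : Equiv.Perm (Fin n₁)) (τ₂ : Equiv.Perm (Fin n₂))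
    (p : Fin n₂) : sumPerm τ₁ τ₂ (Fin.natAdd n₁ p) = Fin.natAdd n₁ (τ₂ p) := by
  simp [sumPerm, ← finSumFinEquiv_apply_right, Equiv.sumCongr_apply]

lemma sumPerm_mul {n₁ n₂ : ℕ} (τ₁ ν₁ : Equiv.Perm (Fin n₁)) (τ₂ ν₂ : Equiv.Perm (Fin n₂)) :
    sumPerm τ₁ τ₂ * sumPerm ν₁ ν₂ = sumPerm (τ₁ * ν₁) (τ₂ * ν₂) := by
  ext x
  induction x using Fin.addCases with
  | left p => simp [Equiv.Perm.mul_apply, sumPerm_castAdd]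
  | right p => simp [Equiv.Perm.mul_apply, sumPerm_natAdd]

lemma shuffle_exists {n₁ n₂ : ℕ} (π : Equiv.Perm (Fin (n₁ + n₂))) :
    ∃ s τ₁ τ₂, IsShuffle n₁ n₂ s ∧ π = s * sumPerm τ₁ τ₂ := by
  classical
  set f : Fin n₁ → Fin (n₁ + n₂) := π ∘ Fin.castAdd n₂ with hf
  set g : Fin n₂ → Fin (n₁ + n₂) := π ∘ Fin.natAdd n₁ with hg
  set τ₁ := Tuple.sort f
  set τ₂ := Tuple.sort g
  refine ⟨π * sumPerm τ₁ τ₂, τ₁⁻¹, τ₂⁻¹, ⟨?_, ?_⟩, ?_⟩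
  · intro p q hpq
    have h1 : StrictMono (f ∘ τ₁) := by
      refine (Tuple.monotone_sort f).strictMono_of_injective ?_
      exact (π.injective.comp (Fin.castAdd_injective _ _)).comp τ₁.injective
    have : (π * sumPerm τ₁ τ₂) (Fin.castAdd n₂ p) = (f ∘ τ₁) p := by
      simp [Equiv.Perm.mul_apply, sumPerm_castAdd, hf]
    rw [this, show (π * sumPerm τ₁ τ₂) (Fin.castAdd n₂ q) = (f ∘ τ₁) q by
      simp [Equiv.Perm.mul_apply, sumPerm_castAdd, hf]]
    exact h1 hpq
  · intro p q hpq
    have h1 : StrictMono (g ∘ τ₂) := by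
      refine (Tuple.monotone_sort g).strictMono_of_injective ?_
      exact (π.injective.comp (fun a b hab => by
        simpa [Fin.ext_iff] using congrArg Fin.val hab)).comp τ₂.injective
    have e1 : (π * sumPerm τ₁ τ₂) (Fin.natAdd n₁ p) = (g ∘ τ₂) p := by
      simp [Equiv.Perm.mul_apply, sumPerm_natAdd, hg]
    rw [e1, show (π * sumPerm τ₁ τ₂) (Fin.natAdd n₁ q) = (g ∘ τ₂) q by
      simp [Equiv.Perm.mul_apply, sumPerm_natAdd, hg]]
    exact h1 hpq
  · rw [mul_assoc, sumPerm_mul]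
    simp [sumPerm]; ext x; simp

lemma strictMono_of_id_comp {n : ℕ} (c : Equiv.Perm (Fin n)) (hc : StrictMono ⇑c) :
    c = 1 := by
  have := Tuple.unique_monotone (f := (id : Fin n → Fin n)) (σ := c) (τ := 1)
    hc.monotone monotone_id
  exact Equiv.ext fun x => congrFun this x

lemma shuffle_factor_unique {n₁ n₂ : ℕ} {s s' : Equiv.Perm (Fin (n₁ + n₂))}
    {τ₁ ν₁ : Equiv.Perm (Fin n₁)} {τ₂ ν₂ : Equiv.Perm (Fin n₂)}
    (hs : IsShuffle n₁ n₂ s) (hs' : IsShuffle n₁ n₂ s')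
    (h : s * sumPerm τ₁ τ₂ = s' * sumPerm ν₁ ν₂) :
    s = s' ∧ τ₁ = ν₁ ∧ τ₂ = ν₂ := by
  have hsm : StrictMono (fun p => s (Fin.castAdd n₂ p)) := fun p q hpq => hs.1 p q hpq
  have hsm' : StrictMono (fun p => s' (Fin.castAdd n₂ p)) := fun p q hpq => hs'.1 p q hpq
  have hsn : StrictMono (fun p => s (Fin.natAdd n₁ p)) := fun p q hpq => hs.2 p q hpq
  have hsn' : StrictMono (fun p => s' (Fin.natAdd n₁ p)) := fun p q hpq => hs'.2 p q hpq
  have key1 : ∀ q : Fin n₁, s (Fin.castAdd n₂ q) = s' (Fin.castAdd n₂ ((ν₁ * τ₁⁻¹) q)) := by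
    intro q
    have := congrFun (congrArg (fun (e : Equiv.Perm _) => ⇑e) h) (Fin.castAdd n₂ (τ₁⁻¹ q))
    simp only [Equiv.Perm.mul_apply, sumPerm_castAdd] at this
    simpa using this
  have key2 : ∀ q : Fin n₂, s (Fin.natAdd n₁ q) = s' (Fin.natAdd n₁ ((ν₂ * τ₂⁻¹) q)) := by
    intro q
    have := congrFun (congrArg (fun (e : Equiv.Perm _) => ⇑e) h) (Fin.natAdd n₁ (τ₂⁻¹ q))
    simp only [Equiv.Perm.mul_apply, sumPerm_natAdd] at this
    simpa using this
  have hc1 : (ν₁ * τ₁⁻¹) = 1 := by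
    apply strictMono_of_id_comp
    intro p q hpq
    have : s (Fin.castAdd n₂ p) < s (Fin.castAdd n₂ q) := hsm hpq
    rw [key1 p, key1 q] at this
    exact (hsm'.lt_iff_lt).mp this
  have hc2 : (ν₂ * τ₂⁻¹) = 1 := by
    apply strictMono_of_id_comp
    intro p q hpq
    have : s (Fin.natAdd n₁ p) < s (Fin.natAdd n₁ q) := hsn hpq
    rw [key2 p, key2 q] at this
    exact (hsn'.lt_iff_lt).mp this
  have hτν₁ : τ₁ = ν₁ := by
    have := mul_inv_eq_one.mp hc1; rw [this]
  have hτν₂ : τ₂ = ν₂ := by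
    have := mul_inv_eq_one.mp hc2; rw [this]
  subst hτν₁; subst hτν₂
  exact ⟨mul_right_cancel h, rfl, rfl⟩

-- Stage 3: global factorization and sum reindexing
variable {I : Type} [Fintype I] [DecidableEq I]

noncomputable def shuffleFactor (γ₁ γ₂ : I → ℕ) :
    ({σ : ∀ i, Equiv.Perm (Fin (γ₁ i + γ₂ i)) // ∀ i, IsShuffle (γ₁ i) (γ₂ i) (σ i)} ×
      ((∀ i, Equiv.Perm (Fin (γ₁ i))) × (∀ i, Equiv.Perm (Fin (γ₂ i))))) ≃
    (∀ i, Equiv.Perm (Fin (γ₁ i + γ₂ i))) := by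
  apply Equiv.ofBijective
    (fun x => fun i => x.1.1 i * sumPerm (x.2.1 i) (x.2.2 i))
  constructor
  · rintro ⟨⟨s, hs⟩, τ₁, τ₂⟩ ⟨⟨s', hs'⟩, ν₁, ν₂⟩ h
    have h' : ∀ i, s i * sumPerm (τ₁ i) (τ₂ i) = s' i * sumPerm (ν₁ i) (ν₂ i) :=
      fun i => congrFun h i
    have key : ∀ i, s i = s' i ∧ τ₁ i = ν₁ i ∧ τ₂ i = ν₂ i :=
      fun i => shuffle_factor_unique (hs i) (hs' i) (h' i)
    simp only [Prod.mk.injEq, Subtype.mk.injEq]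
    exact ⟨funext fun i => (key i).1, funext fun i => (key i).2.1,
      funext fun i => (key i).2.2⟩
  · intro π
    choose s τ₁ τ₂ hsh hfac using fun i => shuffle_exists (π i)
    exact ⟨⟨⟨s, hsh⟩, τ₁, τ₂⟩, funext fun i => (hfac i).symm⟩

open Classical in
lemma sum_perm_factor {M : Type*} [AddCommMonoid M] (γ₁ γ₂ : I → ℕ)
    (g : (∀ i, Equiv.Perm (Fin (γ₁ i + γ₂ i))) → M) :
    ∑ π, g π = ∑ σ : ∀ i, Equiv.Perm (Fin (γ₁ i + γ₂ i)),
      (if ∀ i, IsShuffle (γ₁ i) (γ₂ i) (σ i) then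
        ∑ τ₁ : ∀ i, Equiv.Perm (Fin (γ₁ i)), ∑ τ₂ : ∀ i, Equiv.Perm (Fin (γ₂ i)),
          g (fun i => σ i * sumPerm (τ₁ i) (τ₂ i)) else 0) := by
  rw [← Equiv.sum_comp (shuffleFactor γ₁ γ₂) g, Fintype.sum_prod_type]
  rw [← Finset.sum_filter]
  rw [Finset.sum_subtype (p := fun σ : ∀ i, Equiv.Perm (Fin (γ₁ i + γ₂ i)) =>
        ∀ i, IsShuffle (γ₁ i) (γ₂ i) (σ i)) (Finset.univ.filter
      (fun σ : ∀ i, Equiv.Perm (Fin (γ₁ i + γ₂ i)) => ∀ i, IsShuffle (γ₁ i) (γ₂ i) (σ i)))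
      (fun σ => by simp)
      (fun σ => ∑ τ₁ : ∀ i, Equiv.Perm (Fin (γ₁ i)), ∑ τ₂ : ∀ i, Equiv.Perm (Fin (γ₂ i)),
        g (fun i => σ i * sumPerm (τ₁ i) (τ₂ i)))]
  refine Finset.sum_congr rfl fun x _ => ?_
  rw [Fintype.sum_prod_type]
  rfl

-- Stage 4: shuffleMul as a polynomial sum
lemma shuffleDen_ne_zero (γ₁ γ₂ : I → ℕ) : shuffleDen (I := I) γ₁ γ₂ ≠ 0 := by
  refine Finset.prod_ne_zero_iff.mpr fun i _ => ?_
  refine Finset.prod_ne_zero_iff.mpr fun α₁ _ => ?_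
  refine Finset.prod_ne_zero_iff.mpr fun α₂ _ => ?_
  refine sub_ne_zero_of_ne fun hXX => ?_
  have h2 := MvPolynomial.X_injective (R := ℚ) hXX
  have h3 := congrArg (fun v : Vars (γ₁ + γ₂) => (v.2 : ℕ)) h2
  simp only [inrV, inlV] at h3
  have : (α₁ : ℕ) < γ₁ i := α₁.isLt
  simp [Fin.natAdd, Fin.castAdd, Fin.castLE] at h3
  omega

lemma shuffleNum_eq_mul (a : I → I → ℕ) (ha : ∀ i, 1 ≤ a i i) (γ₁ γ₂ : I → ℕ) :
    shuffleNum a γ₁ γ₂ = Fpoly a γ₁ γ₂ * shuffleDen γ₁ γ₂ := by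
  unfold shuffleNum Fpoly shuffleDen
  have key : ∀ i j : I, (∏ α₁ : Fin (γ₁ i), ∏ α₂ : Fin (γ₂ j),
        ((X (inrV (γ₁ := γ₁) ⟨j, α₂⟩) - X (inlV (γ₂ := γ₂) ⟨i, α₁⟩) : Amod (γ₁ + γ₂))) ^ (a i j)) =
      (∏ α₁ : Fin (γ₁ i), ∏ α₂ : Fin (γ₂ j),
        ((X (inrV (γ₁ := γ₁) ⟨j, α₂⟩) - X (inlV (γ₂ := γ₂) ⟨i, α₁⟩) : Amod (γ₁ + γ₂))) ^
          (if i = j then a i i - 1 else a i j)) *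
      (if i = j then ∏ α₁ : Fin (γ₁ i), ∏ α₂ : Fin (γ₂ i),
        ((X (inrV (γ₁ := γ₁) ⟨i, α₂⟩) - X (inlV (γ₂ := γ₂) ⟨i, α₁⟩) : Amod (γ₁ + γ₂))) else 1) := by
    intro i j
    by_cases h : i = j
    · subst h
      simp only [eq_self_iff_true, if_true]
      rw [← Finset.prod_mul_distrib]
      refine Finset.prod_congr rfl fun α₁ _ => ?_
      rw [← Finset.prod_mul_distrib]
      refine Finset.prod_congr rfl fun α₂ _ => ?_
      rw [← pow_succ, Nat.sub_add_cancel (ha i)]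
    · simp [h]
  calc (∏ i : I, ∏ j : I, ∏ α₁ : Fin (γ₁ i), ∏ α₂ : Fin (γ₂ j),
        ((X (inrV (γ₁ := γ₁) ⟨j, α₂⟩) - X (inlV (γ₂ := γ₂) ⟨i, α₁⟩) : Amod (γ₁ + γ₂))) ^ (a i j))
      = ∏ i : I, ∏ j : I, ((∏ α₁ : Fin (γ₁ i), ∏ α₂ : Fin (γ₂ j),
          ((X (inrV (γ₁ := γ₁) ⟨j, α₂⟩) - X (inlV (γ₂ := γ₂) ⟨i, α₁⟩) : Amod (γ₁ + γ₂))) ^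
            (if i = j then a i i - 1 else a i j)) *
        (if i = j then ∏ α₁ : Fin (γ₁ i), ∏ α₂ : Fin (γ₂ i),
          ((X (inrV (γ₁ := γ₁) ⟨i, α₂⟩) - X (inlV (γ₂ := γ₂) ⟨i, α₁⟩) : Amod (γ₁ + γ₂))) else 1)) := by
        exact Finset.prod_congr rfl fun i _ => Finset.prod_congr rfl fun j _ => key i j
    _ = _ := by
        rw [Finset.prod_congr rfl fun i (_ : i ∈ Finset.univ) => Finset.prod_mul_distrib]
        rw [Finset.prod_mul_distrib]
        congr 1
        refine Finset.prod_congr rfl fun i _ => ?_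
        simp

open Classical in
lemma shuffleMul_eq (a : I → I → ℕ) (ha : ∀ i, 1 ≤ a i i) {γ₁ γ₂ : I → ℕ}
    (f₁ : Amod γ₁) (f₂ : Amod γ₂) :
    shuffleMul a f₁ f₂ = ∑ σ : ∀ i : I, Equiv.Perm (Fin (γ₁ i + γ₂ i)),
      if ∀ i : I, IsShuffle (γ₁ i) (γ₂ i) (σ i) then
        rename (permEquiv (γ := γ₁ + γ₂) σ)
          (rename (inlV (γ₂ := γ₂)) f₁ * rename (inrV (γ₁ := γ₁)) f₂ * Fpoly a γ₁ γ₂)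
      else 0 := by
  set RHS := ∑ σ : ∀ i : I, Equiv.Perm (Fin (γ₁ i + γ₂ i)),
      if ∀ i : I, IsShuffle (γ₁ i) (γ₂ i) (σ i) then
        rename (permEquiv (γ := γ₁ + γ₂) σ)
          (rename (inlV (γ₂ := γ₂)) f₁ * rename (inrV (γ₁ := γ₁)) f₂ * Fpoly a γ₁ γ₂)
      else 0 with hRHS
  have hsum : shuffleSum a γ₁ γ₂ f₁ f₂
      = algebraMap (Amod (γ₁ + γ₂)) (FractionRing (Amod (γ₁ + γ₂))) RHS := by
    rw [shuffleSum, hRHS, map_sum]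
    refine Finset.sum_congr rfl fun σ _ => ?_
    by_cases h : ∀ i : I, IsShuffle (γ₁ i) (γ₂ i) (σ i)
    · rw [if_pos h, if_pos h]
      have hden : algebraMap (Amod (γ₁ + γ₂)) (FractionRing (Amod (γ₁ + γ₂)))
          (rename (permEquiv (γ := γ₁ + γ₂) σ) (shuffleDen γ₁ γ₂)) ≠ 0 := by
        rw [Ne, IsFractionRing.to_map_eq_zero_iff]
        exact fun hz => shuffleDen_ne_zero γ₁ γ₂
          ((map_eq_zero_iff _ (rename_injective _ (permEquiv (γ := γ₁ + γ₂) σ).injective)).mp hz)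
      rw [shuffleNum_eq_mul a ha γ₁ γ₂]
      rw [show rename (inlV (γ₂ := γ₂)) f₁ * rename (inrV (γ₁ := γ₁)) f₂ *
          (Fpoly a γ₁ γ₂ * shuffleDen γ₁ γ₂) =
        (rename (inlV (γ₂ := γ₂)) f₁ * rename (inrV (γ₁ := γ₁)) f₂ * Fpoly a γ₁ γ₂) *
          shuffleDen γ₁ γ₂ by ring]
      rw [map_mul (rename (permEquiv (γ := γ₁ + γ₂) σ)), map_mul]
      rw [mul_div_assoc, div_self hden, mul_one]
    · rw [if_neg h, if_neg h, map_zero]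
  have hex : ∃ p : Amod (γ₁ + γ₂),
      algebraMap (Amod (γ₁ + γ₂)) (FractionRing (Amod (γ₁ + γ₂))) p =
        shuffleSum a γ₁ γ₂ f₁ f₂ := ⟨RHS, hsum.symm⟩
  rw [shuffleMul, dif_pos hex]
  exact IsFractionRing.injective (Amod (γ₁ + γ₂)) (FractionRing (Amod (γ₁ + γ₂)))
    (hex.choose_spec.trans hsum)

-- Stage 5: invariance lemmas
lemma castV_rfl {γ : I → ℕ} : castV (rfl : γ = γ) = Equiv.refl (Vars γ) := by
  refine Equiv.ext fun v => ?_
  cases v; rfl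

lemma castA_rfl {γ : I → ℕ} (f : Amod γ) : castA (rfl : γ = γ) f = f := by
  rw [castA, castV_rfl]
  simp [rename_id]

lemma permEquiv_block_inlV {γ₁ γ₂ : I → ℕ} (τ₁ : ∀ i, Equiv.Perm (Fin (γ₁ i)))
    (τ₂ : ∀ i, Equiv.Perm (Fin (γ₂ i))) (v : Vars γ₁) :
    permEquiv (γ := γ₁ + γ₂) (fun i => sumPerm (τ₁ i) (τ₂ i)) (inlV (γ₂ := γ₂) v)
      = inlV (γ₂ := γ₂) ⟨v.1, τ₁ v.1 v.2⟩ := by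
  cases v
  simp only [permEquiv, Equiv.sigmaCongrRight_apply, inlV]
  exact Sigma.ext rfl (heq_of_eq (sumPerm_castAdd _ _ _))

lemma permEquiv_block_inrV {γ₁ γ₂ : I → ℕ} (τ₁ : ∀ i, Equiv.Perm (Fin (γ₁ i)))
    (τ₂ : ∀ i, Equiv.Perm (Fin (γ₂ i))) (v : Vars γ₂) :
    permEquiv (γ := γ₁ + γ₂) (fun i => sumPerm (τ₁ i) (τ₂ i)) (inrV (γ₁ := γ₁) v)
      = inrV (γ₁ := γ₁) ⟨v.1, τ₂ v.1 v.2⟩ := by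
  cases v
  simp only [permEquiv, Equiv.sigmaCongrRight_apply, inrV]
  exact Sigma.ext rfl (heq_of_eq (sumPerm_natAdd _ _ _))

lemma rename_block_inl {γ₁ γ₂ : I → ℕ} (τ₁ : ∀ i, Equiv.Perm (Fin (γ₁ i)))
    (τ₂ : ∀ i, Equiv.Perm (Fin (γ₂ i))) (f₁ : Amod γ₁) :
    rename (permEquiv (γ := γ₁ + γ₂) (fun i => sumPerm (τ₁ i) (τ₂ i)))
        (rename (inlV (γ₂ := γ₂)) f₁)
      = rename (inlV (γ₂ := γ₂)) (rename (permEquiv τ₁) f₁) := by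
  rw [rename_rename, rename_rename]
  have he : (⇑(permEquiv (γ := γ₁ + γ₂) (fun i => sumPerm (τ₁ i) (τ₂ i))) ∘ inlV (γ₂ := γ₂))
      = (inlV (γ₂ := γ₂) ∘ ⇑(permEquiv τ₁)) := by
    funext v
    simp only [Function.comp_apply, permEquiv_block_inlV]
    rfl
  rw [he]

lemma rename_block_inr {γ₁ γ₂ : I → ℕ} (τ₁ : ∀ i, Equiv.Perm (Fin (γ₁ i)))
    (τ₂ : ∀ i, Equiv.Perm (Fin (γ₂ i))) (f₂ : Amod γ₂) :
    rename (permEquiv (γ := γ₁ + γ₂) (fun i => sumPerm (τ₁ i) (τ₂ i)))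
        (rename (inrV (γ₁ := γ₁)) f₂)
      = rename (inrV (γ₁ := γ₁)) (rename (permEquiv τ₂) f₂) := by
  rw [rename_rename, rename_rename]
  have he : (⇑(permEquiv (γ := γ₁ + γ₂) (fun i => sumPerm (τ₁ i) (τ₂ i))) ∘ inrV (γ₁ := γ₁))
      = (inrV (γ₁ := γ₁) ∘ ⇑(permEquiv τ₂)) := by
    funext v
    simp only [Function.comp_apply, permEquiv_block_inrV]
    rfl
  rw [he]

lemma Fpoly_block_inv (a : I → I → ℕ) {γ₁ γ₂ : I → ℕ} (τ₁ : ∀ i, Equiv.Perm (Fin (γ₁ i)))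
    (τ₂ : ∀ i, Equiv.Perm (Fin (γ₂ i))) :
    rename (permEquiv (γ := γ₁ + γ₂) (fun i => sumPerm (τ₁ i) (τ₂ i))) (Fpoly a γ₁ γ₂)
      = Fpoly a γ₁ γ₂ := by
  rw [Fpoly, map_prod]
  refine Finset.prod_congr rfl fun i _ => ?_
  rw [map_prod]
  refine Finset.prod_congr rfl fun j _ => ?_
  rw [map_prod]
  refine Fintype.prod_equiv (τ₁ i) _ _ fun α₁ => ?_
  rw [map_prod]
  refine Fintype.prod_equiv (τ₂ j) _ _ fun α₂ => ?_
  rw [map_pow, map_sub, rename_X, rename_X, permEquiv_block_inlV, permEquiv_block_inrV]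

lemma sigmaP_isSym (γ : I → ℕ) : IsSym (sigmaP γ) := by
  intro σ
  rw [sigmaP, map_sum]
  simp only [rename_X]
  exact Fintype.sum_equiv (permEquiv σ) _ _ fun x => rfl

lemma mem_aprim_diff {γ : I → ℕ} (u v : Vars γ) : X u - X v ∈ Aprim (I := I) γ :=
  Algebra.subset_adjoin ⟨u, v, rfl⟩

lemma Fpoly_mem_aprim (a : I → I → ℕ) (γ₁ γ₂ : I → ℕ) :
    Fpoly a γ₁ γ₂ ∈ Aprim (I := I) (γ₁ + γ₂) := by
  rw [Fpoly]
  refine Subalgebra.prod_mem _ fun i _ => Subalgebra.prod_mem _ fun j _ =>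
    Subalgebra.prod_mem _ fun α₁ _ => Subalgebra.prod_mem _ fun α₂ _ =>
      Subalgebra.pow_mem _ (mem_aprim_diff _ _) _

lemma rename_perm_mem_aprim {γ : I → ℕ} (σ : ∀ i, Equiv.Perm (Fin (γ i)))
    {p : Amod γ} (hp : p ∈ Aprim (I := I) γ) :
    rename (permEquiv σ) p ∈ Aprim (I := I) γ := by
  induction hp using Algebra.adjoin_induction with
  | mem x hx =>
      obtain ⟨u, v, rfl⟩ := hx
      rw [map_sub, rename_X, rename_X]
      exact mem_aprim_diff _ _
  | algebraMap r => rw [AlgHom.commutes]; exact Subalgebra.algebraMap_mem _ r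
  | add x y _ _ hx hy => rw [map_add]; exact add_mem hx hy
  | mul x y _ _ hx hy => rw [map_mul]; exact mul_mem hx hy

-- Stage 6: spanning lemmas
def PSset (γ : I → ℕ) : Set (Amod γ) :=
  {f | ∃ p ∈ Aprim (I := I) γ, ∃ n : ℕ, f = p * sigmaP γ ^ n}

lemma mul_X_mem_span_PS {γ : I → ℕ} (f : Amod γ) (hf : f ∈ Submodule.span ℚ (PSset γ))
    (v : Vars γ) : f * X v ∈ Submodule.span ℚ (PSset γ) := by
  induction hf using Submodule.span_induction with
  | mem x hx =>
      obtain ⟨p, hp, n, rfl⟩ := hx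
      have hN : (0:ℚ) < (Fintype.card (Vars γ) : ℚ) := by
        have : Nonempty (Vars γ) := ⟨v⟩
        exact_mod_cast Fintype.card_pos
      have hX' : ((Fintype.card (Vars γ) : ℚ)) • (X v : Amod γ)
          = sigmaP γ + ∑ u : Vars γ, (X v - X u) := by
        rw [Finset.sum_sub_distrib, Finset.sum_const, Finset.card_univ,
          Nat.cast_smul_eq_nsmul ℚ, sigmaP]
        abel
      have key : ((Fintype.card (Vars γ) : ℚ)) • (p * sigmaP γ ^ n * X v)
          = p * sigmaP γ ^ (n+1)
            + ∑ u : Vars γ, (p * (X v - X u)) * sigmaP γ ^ n := by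
        rw [← mul_smul_comm, hX', mul_add, Finset.mul_sum]
        rw [pow_succ]
        rw [Finset.sum_congr rfl fun u (_ : u ∈ Finset.univ) =>
          show p * sigmaP γ ^ n * (X v - X u) = (p * (X v - X u)) * sigmaP γ ^ n by ring]
        ring
      have hmem : ((Fintype.card (Vars γ) : ℚ)) • (p * sigmaP γ ^ n * X v)
          ∈ Submodule.span ℚ (PSset γ) := by
        rw [key]
        refine add_mem (Submodule.subset_span ⟨p, hp, n+1, rfl⟩)
          (Submodule.sum_mem _ fun u _ => Submodule.subset_span
            ⟨p * (X v - X u), mul_mem hp (mem_aprim_diff v u), n, rfl⟩)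
      have := Submodule.smul_mem _ (((Fintype.card (Vars γ) : ℚ))⁻¹) hmem
      rwa [smul_smul, inv_mul_cancel₀ (ne_of_gt hN), one_smul] at this
  | zero => rw [zero_mul]; exact Submodule.zero_mem _
  | add x y _ _ hx hy => rw [add_mul]; exact add_mem hx hy
  | smul c x _ hx => rw [smul_mul_assoc]; exact Submodule.smul_mem _ _ hx

lemma mem_span_PS {γ : I → ℕ} (f : Amod γ) : f ∈ Submodule.span ℚ (PSset γ) := by
  induction f using MvPolynomial.induction_on with
  | C r =>
      have h1 : (1 : Amod γ) ∈ PSset γ := ⟨1, one_mem _, 0, by simp⟩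
      have := Submodule.smul_mem _ r (Submodule.subset_span h1)
      rwa [show r • (1 : Amod γ) = C r by rw [MvPolynomial.smul_eq_C_mul, mul_one]] at this
  | add p q hp hq => exact add_mem hp hq
  | mul_X p v hp => exact mul_X_mem_span_PS p hp v

def IRset (γ₁ γ₂ : I → ℕ) : Set (Amod (γ₁ + γ₂)) :=
  {w | ∃ (u : Amod γ₁) (v : Amod γ₂),
    w = rename (inlV (γ₂ := γ₂)) u * rename (inrV (γ₁ := γ₁)) v}

lemma mul_X_mem_span_IR {γ₁ γ₂ : I → ℕ} (f : Amod (γ₁ + γ₂))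
    (hf : f ∈ Submodule.span ℚ (IRset γ₁ γ₂)) (x : Vars (γ₁ + γ₂)) :
    f * X x ∈ Submodule.span ℚ (IRset γ₁ γ₂) := by
  induction hf using Submodule.span_induction with
  | mem w hw =>
      obtain ⟨u, v, rfl⟩ := hw
      obtain ⟨i, β⟩ := x
      have hβ : ∀ β' : Fin (γ₁ i + γ₂ i),
          rename (inlV (γ₂ := γ₂)) u * rename (inrV (γ₁ := γ₁)) v * X ⟨i, β'⟩
            ∈ Submodule.span ℚ (IRset γ₁ γ₂) := by
        intro β'
        induction β' using Fin.addCases with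
        | left p =>
            refine Submodule.subset_span ⟨u * X ⟨i, p⟩, v, ?_⟩
            rw [map_mul, rename_X]
            show _ = rename (inlV (γ₂ := γ₂)) u * X (inlV (γ₂ := γ₂) ⟨i, p⟩) * rename inrV v
            ring_nf
            rfl
        | right q =>
            refine Submodule.subset_span ⟨u, v * X ⟨i, q⟩, ?_⟩
            rw [map_mul, rename_X]
            show _ = rename inlV u * (rename (inrV (γ₁ := γ₁)) v * X (inrV (γ₁ := γ₁) ⟨i, q⟩))
            ring_nf
            rfl
      exact hβ β
  | zero => rw [zero_mul]; exact Submodule.zero_mem _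
  | add y z _ _ hy hz => rw [add_mul]; exact add_mem hy hz
  | smul c y _ hy => rw [smul_mul_assoc]; exact Submodule.smul_mem _ _ hy

lemma mem_span_IR {γ₁ γ₂ : I → ℕ} (f : Amod (γ₁ + γ₂)) :
    f ∈ Submodule.span ℚ (IRset γ₁ γ₂) := by
  induction f using MvPolynomial.induction_on with
  | C r =>
      refine Submodule.subset_span ⟨C r, 1, ?_⟩
      simp
  | add p q hp hq => exact add_mem hp hq
  | mul_X p v hp => exact mul_X_mem_span_IR p hp v

-- Stage 7: bridges
lemma renameP_one {γ : I → ℕ} (f : Amod γ) : renameP (1 : ∀ i, Equiv.Perm (Fin (γ i))) f = f := by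
  have : permEquiv (1 : ∀ i, Equiv.Perm (Fin (γ i))) = Equiv.refl (Vars γ) := by
    refine Equiv.ext fun v => ?_
    cases v; rfl
  rw [renameP_apply, this]
  simp [rename_id]

open Classical in
lemma symm_mul_eq_shuffleMul (a : I → I → ℕ) (ha : ∀ i, 1 ≤ a i i) {γ₁ γ₂ : I → ℕ}
    (u : Amod γ₁) (v : Amod γ₂) :
    Symm (γ₁ + γ₂) (rename (inlV (γ₂ := γ₂)) u * rename (inrV (γ₁ := γ₁)) v * Fpoly a γ₁ γ₂)
      = shuffleMul a (Symm γ₁ u) (Symm γ₂ v) := by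
  set w : Amod (γ₁ + γ₂) :=
    rename (inlV (γ₂ := γ₂)) u * rename (inrV (γ₁ := γ₁)) v * Fpoly a γ₁ γ₂ with hw
  have h0 : Symm (γ₁ + γ₂) w
      = ∑ π : ∀ i, Equiv.Perm (Fin (γ₁ i + γ₂ i)), renameP (γ := γ₁ + γ₂) π w := rfl
  rw [h0, sum_perm_factor γ₁ γ₂ (fun π => renameP (γ := γ₁ + γ₂) π w),
    shuffleMul_eq a ha]
  refine Finset.sum_congr rfl fun σ _ => ?_
  by_cases h : ∀ i : I, IsShuffle (γ₁ i) (γ₂ i) (σ i)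
  · rw [if_pos h, if_pos h]
    have inner : ∀ (τ₁ : ∀ i, Equiv.Perm (Fin (γ₁ i))) (τ₂ : ∀ i, Equiv.Perm (Fin (γ₂ i))),
        renameP (γ := γ₁ + γ₂) (fun i => σ i * sumPerm (τ₁ i) (τ₂ i)) w
          = renameP (γ := γ₁ + γ₂) σ
            (rename (inlV (γ₂ := γ₂)) (renameP τ₁ u) * rename (inrV (γ₁ := γ₁)) (renameP τ₂ v)
              * Fpoly a γ₁ γ₂) := by
      intro τ₁ τ₂
      have hmulfun : (fun i => σ i * sumPerm (τ₁ i) (τ₂ i))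
          = σ * (fun i => sumPerm (τ₁ i) (τ₂ i)) := rfl
      rw [hmulfun, ← renameP_renameP (γ := γ₁ + γ₂) σ (fun i => sumPerm (τ₁ i) (τ₂ i)) w]
      congr 1
      rw [hw, renameP_apply, map_mul, map_mul, Fpoly_block_inv a τ₁ τ₂,
        rename_block_inl, rename_block_inr]
      rfl
    rw [Finset.sum_congr rfl fun τ₁ _ => Finset.sum_congr rfl fun τ₂ _ => inner τ₁ τ₂]
    have collect : ∑ τ₁ : ∀ i, Equiv.Perm (Fin (γ₁ i)), ∑ τ₂ : ∀ i, Equiv.Perm (Fin (γ₂ i)),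
        (rename (inlV (γ₂ := γ₂)) (renameP τ₁ u) * rename (inrV (γ₁ := γ₁)) (renameP τ₂ v)
          * Fpoly a γ₁ γ₂)
        = rename (inlV (γ₂ := γ₂)) (Symm γ₁ u) * rename (inrV (γ₁ := γ₁)) (Symm γ₂ v)
          * Fpoly a γ₁ γ₂ := by
      rw [Symm_apply, Symm_apply, map_sum, map_sum, Finset.sum_mul, Finset.sum_mul]
      refine Finset.sum_congr rfl fun τ₁ _ => ?_
      rw [Finset.mul_sum, Finset.sum_mul]
    have step1 : ∀ τ₁ : ∀ i, Equiv.Perm (Fin (γ₁ i)),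
        ∑ τ₂ : ∀ i, Equiv.Perm (Fin (γ₂ i)),
          renameP (γ := γ₁ + γ₂) σ
            (rename (inlV (γ₂ := γ₂)) (renameP τ₁ u) * rename (inrV (γ₁ := γ₁)) (renameP τ₂ v)
              * Fpoly a γ₁ γ₂)
        = renameP (γ := γ₁ + γ₂) σ (∑ τ₂ : ∀ i, Equiv.Perm (Fin (γ₂ i)),
            (rename (inlV (γ₂ := γ₂)) (renameP τ₁ u) * rename (inrV (γ₁ := γ₁)) (renameP τ₂ v)
              * Fpoly a γ₁ γ₂)) := fun τ₁ => (map_sum _ _ _).symm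
    rw [Finset.sum_congr rfl fun τ₁ (_ : τ₁ ∈ Finset.univ) => step1 τ₁]
    rw [← map_sum (renameP (γ := γ₁ + γ₂) σ), collect]
    exact renameP_apply σ _
  · rw [if_neg h, if_neg h]

open Classical in
lemma symm_shuffle_smul (a : I → I → ℕ) (ha : ∀ i, 1 ≤ a i i) {γ₁ γ₂ : I → ℕ}
    {f₁ : Amod γ₁} {f₂ : Amod γ₂} (h₁ : IsSym f₁) (h₂ : IsSym f₂) :
    Symm (γ₁ + γ₂) (rename (inlV (γ₂ := γ₂)) f₁ * rename (inrV (γ₁ := γ₁)) f₂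
        * Fpoly a γ₁ γ₂)
      = (((Fintype.card (∀ i, Equiv.Perm (Fin (γ₁ i))) : ℚ))
          * ((Fintype.card (∀ i, Equiv.Perm (Fin (γ₂ i))) : ℚ)))
        • shuffleMul a f₁ f₂ := by
  rw [symm_mul_eq_shuffleMul a ha, card_smul_of_isSym h₁, card_smul_of_isSym h₂]
  rw [shuffleMul_eq a ha, shuffleMul_eq a ha, Finset.smul_sum]
  refine Finset.sum_congr rfl fun σ _ => ?_
  by_cases h : ∀ i : I, IsShuffle (γ₁ i) (γ₂ i) (σ i)
  · rw [if_pos h, if_pos h]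
    simp only [smul_mul_assoc, mul_smul_comm, smul_smul, map_smul]
    rw [mul_comm]
  · rw [if_neg h, if_neg h, smul_zero]

-- Stage 8: the three sets and inclusions
def Lset (a : I → I → ℕ) (γ : I → ℕ) : Set (Amod γ) :=
  {h | ∃ (γ₁ γ₂ : I → ℕ) (_ : γ₁ ≠ 0) (_ : γ₂ ≠ 0) (hs : γ₁ + γ₂ = γ)
      (f₁ : Amod γ₁) (f₂ : Amod γ₂),
      IsSym f₁ ∧ IsSym f₂ ∧ h = castA hs (shuffleMul a f₁ f₂)}

def Rset (a : I → I → ℕ) (γ : I → ℕ) : Set (Amod γ) :=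
  {h | ∃ (g : ↥(Aprim (I := I) γ)) (n : ℕ),
      g ∈ Jideal a γ ∧ IsSym (g : Amod γ) ∧ h = (g : Amod γ) * sigmaP γ ^ n}

def Mset (a : I → I → ℕ) (γ : I → ℕ) : Set (Amod γ) :=
  {h | ∃ (γ₁ γ₂ : I → ℕ) (_ : γ₁ ≠ 0) (_ : γ₂ ≠ 0) (hs : γ₁ + γ₂ = γ) (q : Amod γ),
      h = Symm γ (q * castA hs (Fpoly a γ₁ γ₂))}

lemma L_subset_spanM (a : I → I → ℕ) (ha : ∀ i, 1 ≤ a i i) (γ : I → ℕ) :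
    Lset a γ ⊆ (Submodule.span ℚ (Mset a γ) : Submodule ℚ (Amod γ)) := by
  rintro h ⟨γ₁, γ₂, h1, h2, hs, f₁, f₂, hf₁, hf₂, rfl⟩
  subst hs
  rw [castA_rfl]
  set c : ℚ := ((Fintype.card (∀ i, Equiv.Perm (Fin (γ₁ i))) : ℚ))
      * ((Fintype.card (∀ i, Equiv.Perm (Fin (γ₂ i))) : ℚ)) with hc
  have hcpos : 0 < c := by
    rw [hc]
    have p1 : 0 < (Fintype.card (∀ i, Equiv.Perm (Fin (γ₁ i))) : ℚ) := by
      exact_mod_cast Fintype.card_pos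
    have p2 : 0 < (Fintype.card (∀ i, Equiv.Perm (Fin (γ₂ i))) : ℚ) := by
      exact_mod_cast Fintype.card_pos
    exact mul_pos p1 p2
  have hb := symm_shuffle_smul a ha hf₁ hf₂
  have he : shuffleMul a f₁ f₂ = c⁻¹ • Symm (γ₁ + γ₂)
      (rename (inlV (γ₂ := γ₂)) f₁ * rename (inrV (γ₁ := γ₁)) f₂ * Fpoly a γ₁ γ₂) := by
    rw [hb, ← hc, smul_smul, inv_mul_cancel₀ (ne_of_gt hcpos), one_smul]
  rw [he]
  refine Submodule.smul_mem _ _ (Submodule.subset_span ?_)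
  refine ⟨γ₁, γ₂, h1, h2, rfl,
    rename (inlV (γ₂ := γ₂)) f₁ * rename (inrV (γ₁ := γ₁)) f₂, ?_⟩
  rw [castA_rfl]

lemma M_subset_spanL (a : I → I → ℕ) (ha : ∀ i, 1 ≤ a i i) (γ : I → ℕ) :
    Mset a γ ⊆ (Submodule.span ℚ (Lset a γ) : Submodule ℚ (Amod γ)) := by
  rintro h ⟨γ₁, γ₂, h1, h2, hs, q, rfl⟩
  subst hs
  rw [castA_rfl]
  have hq := mem_span_IR (γ₁ := γ₁) (γ₂ := γ₂) q
  induction hq using Submodule.span_induction with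
  | mem x hx =>
      obtain ⟨u, v, rfl⟩ := hx
      rw [symm_mul_eq_shuffleMul a ha u v]
      exact Submodule.subset_span ⟨γ₁, γ₂, h1, h2, rfl, Symm γ₁ u, Symm γ₂ v,
        isSym_Symm _ _, isSym_Symm _ _, (castA_rfl _).symm⟩
  | zero => rw [zero_mul, map_zero]; exact Submodule.zero_mem _
  | add x y _ _ hx hy => rw [add_mul, map_add]; exact add_mem hx hy
  | smul c x _ hx => rw [smul_mul_assoc, map_smul]; exact Submodule.smul_mem _ _ hx

lemma M_subset_spanR (a : I → I → ℕ) (γ : I → ℕ) :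
    Mset a γ ⊆ (Submodule.span ℚ (Rset a γ) : Submodule ℚ (Amod γ)) := by
  rintro h ⟨γ₁, γ₂, h1, h2, hs, q, rfl⟩
  subst hs
  rw [castA_rfl]
  have hq := mem_span_PS (γ := γ₁ + γ₂) q
  induction hq using Submodule.span_induction with
  | mem x hx =>
      obtain ⟨p, hp, n, rfl⟩ := hx
      have hsig : ∀ ρ : ∀ i, Equiv.Perm (Fin ((γ₁ + γ₂) i)),
          renameP (γ := γ₁ + γ₂) ρ (sigmaP (γ₁ + γ₂) ^ n) = sigmaP (γ₁ + γ₂) ^ n :=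
        fun ρ => by rw [renameP_apply, map_pow, sigmaP_isSym _ ρ]
      have e1 : Symm (γ₁ + γ₂) ((p * sigmaP (γ₁ + γ₂) ^ n) * Fpoly a γ₁ γ₂)
          = Symm (γ₁ + γ₂) (p * Fpoly a γ₁ γ₂) * sigmaP (γ₁ + γ₂) ^ n := by
        rw [Symm_apply, Symm_apply, Finset.sum_mul]
        refine Finset.sum_congr rfl fun ρ _ => ?_
        rw [show (p * sigmaP (γ₁ + γ₂) ^ n) * Fpoly a γ₁ γ₂
            = (p * Fpoly a γ₁ γ₂) * sigmaP (γ₁ + γ₂) ^ n by ring]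
        rw [map_mul, hsig ρ]
      rw [e1]
      have hFA : Fpoly a γ₁ γ₂ ∈ Aprim (I := I) (γ₁ + γ₂) := Fpoly_mem_aprim a γ₁ γ₂
      set g : ↥(Aprim (I := I) (γ₁ + γ₂)) := ∑ ρ : ∀ i, Equiv.Perm (Fin ((γ₁ + γ₂) i)),
        (⟨renameP ρ p, rename_perm_mem_aprim ρ hp⟩ : ↥(Aprim (I := I) (γ₁ + γ₂))) *
          (⟨renameP ρ (Fpoly a γ₁ γ₂), rename_perm_mem_aprim ρ hFA⟩ :
            ↥(Aprim (I := I) (γ₁ + γ₂))) with hg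
      have hgco : (g : Amod (γ₁ + γ₂)) = Symm (γ₁ + γ₂) (p * Fpoly a γ₁ γ₂) := by
        show (Subalgebra.val _) g = _
        rw [hg, map_sum, Symm_apply]
        refine Finset.sum_congr rfl fun ρ _ => ?_
        rw [map_mul, map_mul]
        rfl
      have hgJ : g ∈ Jideal a (γ₁ + γ₂) := by
        rw [hg]
        refine Ideal.sum_mem _ fun ρ _ => Ideal.mul_mem_left _ _ (Ideal.subset_span ?_)
        refine ⟨γ₁, γ₂, h1, h2, rfl, ρ, ?_⟩
        show renameP ρ (Fpoly a γ₁ γ₂) = _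
        rw [castA_rfl]
        rfl
      refine Submodule.subset_span ⟨g, n, hgJ, ?_, ?_⟩
      · rw [hgco]; exact isSym_Symm _ _
      · rw [hgco]
  | zero => rw [zero_mul, map_zero]; exact Submodule.zero_mem _
  | add x y _ _ hx hy => rw [add_mul, map_add]; exact add_mem hx hy
  | smul c x _ hx => rw [smul_mul_assoc, map_smul]; exact Submodule.smul_mem _ _ hx

lemma jideal_symm_mem (a : I → I → ℕ) (γ : I → ℕ) :
    ∀ x ∈ Jideal a γ, ∀ q : Amod γ,
      Symm γ (q * (x : Amod γ)) ∈ Submodule.span ℚ (Mset a γ) := by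
  intro x hx
  induction hx using Submodule.span_induction with
  | mem y hy =>
      intro q
      obtain ⟨γ₁, γ₂, h1, h2, hs, ρ₀, hyco⟩ := hy
      have he : q * (y : Amod γ)
          = renameP ρ₀ (renameP ρ₀⁻¹ q * castA hs (Fpoly a γ₁ γ₂)) := by
        rw [map_mul, renameP_renameP, mul_inv_cancel, renameP_one, hyco]
        rfl
      rw [he, Symm_renameP]
      exact Submodule.subset_span ⟨γ₁, γ₂, h1, h2, hs, renameP ρ₀⁻¹ q, rfl⟩
  | zero =>
      intro q
      rw [ZeroMemClass.coe_zero, mul_zero, map_zero]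
      exact Submodule.zero_mem _
  | add x y _ _ hx hy =>
      intro q
      rw [AddMemClass.coe_add, mul_add, map_add]
      exact add_mem (hx q) (hy q)
  | smul r x _ hx =>
      intro q
      have hco : ((r • x : ↥(Aprim (I := I) γ)) : Amod γ) = (r : Amod γ) * (x : Amod γ) := rfl
      rw [hco, ← mul_assoc]
      exact hx (q * (r : Amod γ))

lemma R_subset_spanM (a : I → I → ℕ) (γ : I → ℕ) :
    Rset a γ ⊆ (Submodule.span ℚ (Mset a γ) : Submodule ℚ (Amod γ)) := by
  rintro h ⟨g, n, hgJ, hgS, rfl⟩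
  set c : ℚ := (Fintype.card (∀ i, Equiv.Perm (Fin (γ i))) : ℚ) with hc
  have hcpos : 0 < c := by rw [hc]; exact_mod_cast Fintype.card_pos
  have e : Symm γ (sigmaP γ ^ n * (g : Amod γ)) = c • ((g : Amod γ) * sigmaP γ ^ n) := by
    rw [Symm_apply]
    rw [Finset.sum_congr rfl fun ρ (_ : ρ ∈ Finset.univ) => show
      renameP ρ (sigmaP γ ^ n * (g : Amod γ)) = (g : Amod γ) * sigmaP γ ^ n by
        rw [map_mul, renameP_apply, map_pow, sigmaP_isSym γ ρ,
          show renameP (γ := γ) ρ (g : Amod γ) = (g : Amod γ) from hgS ρ]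
        ring]
    rw [Finset.sum_const, Finset.card_univ, hc, Nat.cast_smul_eq_nsmul ℚ]
  have hmem := jideal_symm_mem a γ g hgJ (sigmaP γ ^ n)
  rw [e] at hmem
  have := Submodule.smul_mem _ (c⁻¹) hmem
  rwa [smul_smul, inv_mul_cancel₀ (ne_of_gt hcpos), one_smul] at this

end Lemmas

/-- **The image of the multiplication map.**  For a symmetric quiver with at least one
loop at each vertex, the span of all shuffle products `f₁ · f₂` over all decompositions
`γ = γ₁ + γ₂` with `γ₁, γ₂ ≠ 0` and all `f₁ ∈ ℋ_{γ₁}`, `f₂ ∈ ℋ_{γ₂}` is precisely the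
`ℚ[σ_γ]`-submodule of `ℋ_γ` generated by `J_γ^{P_γ} = J_γ ∩ ℋ_γ^{prim}`. -/
theorem image_of_multiplication_eq
    (I : Type) [Fintype I] [DecidableEq I] (a : I → I → ℕ)
    (hsym : ∀ i j : I, a i j = a j i) (hloops : ∀ i : I, 1 ≤ a i i) (γ : I → ℕ) :
    Submodule.span ℚ {h : Amod γ |
        ∃ (γ₁ γ₂ : I → ℕ) (_ : γ₁ ≠ 0) (_ : γ₂ ≠ 0) (hs : γ₁ + γ₂ = γ)
          (f₁ : Amod γ₁) (f₂ : Amod γ₂),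
          IsSym f₁ ∧ IsSym f₂ ∧ h = castA hs (shuffleMul a f₁ f₂)} =
      Submodule.span ℚ {h : Amod γ |
        ∃ (g : ↥(Aprim (I := I) γ)) (n : ℕ),
          g ∈ Jideal a γ ∧ IsSym (g : Amod γ) ∧ h = (g : Amod γ) * sigmaP γ ^ n} := by
  apply le_antisymm
  · exact le_trans (Submodule.span_le.mpr (L_subset_spanM a hloops γ))
      (Submodule.span_le.mpr (M_subset_spanR a γ))
  · exact le_trans (Submodule.span_le.mpr (R_subset_spanM a γ))
      (Submodule.span_le.mpr (M_subset_spanL a hloops γ))
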